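/- If m is an even integer with 6 ≤ m ≤ n(n-1)/2, then the identity permutation in S_n can be expressed as a product of m pairwise distinct transpositions. -/

import Mathlib

open Equiv List

abbrev Edge := ℕ × ℕ

def sw (p : Edge) : Equiv.Perm ℕ := Equiv.swap p.1 p.2

lemma swap_conj {a b x : ℕ} (hab : a ≠ b) (hax : a ≠ x) (hbx : b ≠ x) :
    Equiv.swap b x = Equiv.swap a b * Equiv.swap a x * Equiv.swap a b := by
  have h := Equiv.swap_apply_apply (Equiv.swap a b) a x
  rw [Equiv.swap_apply_left, Equiv.swap_apply_of_ne_of_ne hax.symm hbx.symm] at h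
  simpa using h

lemma sw_conj {a b x : ℕ} (hab : a ≠ b) (hax : a ≠ x) (hbx : b ≠ x) :
    sw (b, x) = sw (a, b) * sw (a, x) * sw (a, b) :=
  swap_conj hab hax hbx

def B4 : List Edge := [(1,2),(3,4),(1,3),(2,4),(1,4),(2,3)]

lemma prod_B4 : (B4.map sw).prod = 1 := by
  ext x
  simp only [B4, sw, List.map_cons, List.map_nil, List.prod_cons, List.prod_nil, mul_one,
    Equiv.Perm.mul_apply, Equiv.Perm.one_apply]
  have : x = 0 ∨ x = 1 ∨ x = 2 ∨ x = 3 ∨ x = 4 ∨ 5 ≤ x := by omega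
  rcases this with h|h|h|h|h|h
  · subst h; norm_num [Equiv.swap_apply_def]
  · subst h; norm_num [Equiv.swap_apply_def]
  · subst h; norm_num [Equiv.swap_apply_def]
  · subst h; norm_num [Equiv.swap_apply_def]
  · subst h; norm_num [Equiv.swap_apply_def]
  · have h1 : x ≠ 1 := by omega
    have h2 : x ≠ 2 := by omega
    have h3 : x ≠ 3 := by omega
    have h4 : x ≠ 4 := by omega
    simp [Equiv.swap_apply_def, h1, h2, h3, h4]

def Doable (s : List Edge) : Prop := ∃ L : List Edge, L.Perm s ∧ (L.map sw).prod = 1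

lemma doable_step {c u w : Edge} {s : List Edge} (hc : c ∈ s)
    (hw : sw w = sw c * sw u * sw c) (h : Doable s) : Doable (u :: w :: s) := by
  obtain ⟨L, hp, h1⟩ := h
  obtain ⟨A, B, rfl⟩ := List.append_of_mem (hp.mem_iff.2 hc)
  refine ⟨(c :: u :: (B ++ A)) ++ [w], ?_, ?_⟩
  · refine (List.perm_append_singleton w _).trans ?_
    calc w :: c :: u :: (B ++ A)
        ~ c :: w :: u :: (B ++ A) := List.Perm.swap _ _ _
      _ ~ c :: u :: w :: (B ++ A) := (List.Perm.swap _ _ _).cons c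
      _ ~ u :: c :: w :: (B ++ A) := List.Perm.swap _ _ _
      _ ~ u :: w :: c :: (B ++ A) := (List.Perm.swap _ _ _).cons u
      _ ~ u :: w :: c :: (A ++ B) := (((List.perm_append_comm).cons c).cons w).cons u
      _ ~ u :: w :: (A ++ c :: B) := ((List.perm_middle.symm).cons w).cons u
      _ ~ u :: w :: s := (hp.cons w).cons u
  · have hA : (A.map sw).prod * (sw c * (B.map sw).prod) = 1 := by
      simpa using h1
    rw [← mul_assoc] at hA
    have h2 : (B.map sw).prod = (sw c)⁻¹ * ((A.map sw).prod)⁻¹ := by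
      have h3 := (inv_eq_of_mul_eq_one_right hA).symm
      rwa [mul_inv_rev] at h3
    simp only [List.map_append, List.prod_append, List.map_cons, List.prod_cons, List.map_nil,
      List.prod_nil, mul_one, h2, hw]
    simp [sw, mul_assoc, Equiv.swap_mul_self_mul, Equiv.swap_mul_self, Equiv.swap_inv]

abbrev Trip := Edge × Edge × Edge

def applyTrips : List Trip → List Edge → List Edge
  | [], s => s
  | t :: ts, s => applyTrips ts (t.2.1 :: t.2.2 :: s)

def GoodSeq : List Trip → List Edge → Prop
  | [], _ => True
  | t :: ts, s => t.1 ∈ s ∧ (sw t.2.2 = sw t.1 * sw t.2.1 * sw t.1) ∧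
      t.2.1 ∉ s ∧ t.2.2 ∉ s ∧ t.2.1 ≠ t.2.2 ∧ GoodSeq ts (t.2.1 :: t.2.2 :: s)

lemma doable_applyTrips : ∀ (ts : List Trip) (s : List Edge),
    Doable s → GoodSeq ts s → Doable (applyTrips ts s)
  | [], s, h, _ => h
  | t :: ts, s, h, hg =>
    doable_applyTrips ts _ (doable_step hg.1 hg.2.1 h) hg.2.2.2.2.2

lemma nodup_applyTrips : ∀ (ts : List Trip) (s : List Edge),
    s.Nodup → GoodSeq ts s → (applyTrips ts s).Nodup
  | [], s, h, _ => h
  | t :: ts, s, h, hg => by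
    refine nodup_applyTrips ts _ ?_ hg.2.2.2.2.2
    simp [h, hg.2.2.1, hg.2.2.2.1, hg.2.2.2.2.1]

lemma length_applyTrips : ∀ (ts : List Trip) (s : List Edge),
    (applyTrips ts s).length = 2 * ts.length + s.length
  | [], s => by simp [applyTrips]
  | t :: ts, s => by simp [applyTrips, length_applyTrips ts]; omega

lemma mem_applyTrips : ∀ (ts : List Trip) (s : List Edge) (p : Edge),
    p ∈ applyTrips ts s ↔ p ∈ s ∨ ∃ t ∈ ts, p = t.2.1 ∨ p = t.2.2
  | [], s, p => by simp [applyTrips]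
  | t :: ts, s, p => by
    simp only [applyTrips, mem_applyTrips ts, List.mem_cons]
    constructor
    · rintro ((h|h|h)|⟨t',ht',h⟩)
      · exact Or.inr ⟨t, Or.inl rfl, Or.inl h⟩
      · exact Or.inr ⟨t, Or.inl rfl, Or.inr h⟩
      · exact Or.inl h
      · exact Or.inr ⟨t', Or.inr ht', h⟩
    · rintro (h|⟨t',(rfl|ht'),h⟩)
      · exact Or.inl (Or.inr (Or.inr h))
      · rcases h with h|h
        · exact Or.inl (Or.inl h)
        · exact Or.inl (Or.inr (Or.inl h))
      · exact Or.inr ⟨t', ht', h⟩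

lemma goodSeq_append : ∀ (ts ts' : List Trip) (s : List Edge),
    GoodSeq ts s → GoodSeq ts' (applyTrips ts s) → GoodSeq (ts ++ ts') s
  | [], ts', s, _, h' => h'
  | t :: ts, ts', s, h, h' =>
    ⟨h.1, h.2.1, h.2.2.1, h.2.2.2.1, h.2.2.2.2.1,
      goodSeq_append ts ts' _ h.2.2.2.2.2 h'⟩

lemma goodSeq_take : ∀ (j : ℕ) (ts : List Trip) (s : List Edge),
    GoodSeq ts s → GoodSeq (ts.take j) s
  | 0, ts, s, _ => trivial
  | j+1, [], s, h => h
  | j+1, t :: ts, s, h =>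
    ⟨h.1, h.2.1, h.2.2.1, h.2.2.2.1, h.2.2.2.2.1, goodSeq_take j ts _ h.2.2.2.2.2⟩

def starTrips (v : ℕ) : ℕ → ℕ → List Trip
  | _, 0 => []
  | a, r+1 => ((a, a+1), (a, v), (a+1, v)) :: starTrips v (a+2) r

lemma length_starTrips (v : ℕ) : ∀ r a, (starTrips v a r).length = r
  | 0, a => rfl
  | r+1, a => by simp [starTrips, length_starTrips v r]

lemma star_edges (v : ℕ) : ∀ r a p, (∃ t ∈ starTrips v a r, p = t.2.1 ∨ p = t.2.2) ↔
    (∃ x, a ≤ x ∧ x < a + 2*r ∧ p = (x, v))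
  | 0, a, p => by simp [starTrips]; omega
  | r+1, a, p => by
    simp only [starTrips, List.mem_cons]
    constructor
    · rintro ⟨t, (rfl | ht), h⟩
      · rcases h with rfl | rfl
        · exact ⟨a, by omega, by omega, rfl⟩
        · exact ⟨a+1, by omega, by omega, rfl⟩
      · obtain ⟨x, hx1, hx2, rfl⟩ := (star_edges v r (a+2) p).1 ⟨t, ht, h⟩
        exact ⟨x, by omega, by omega, rfl⟩
    · rintro ⟨x, hx1, hx2, rfl⟩
      by_cases hxa : x = a
      · exact ⟨((a, a+1), (a, v), (a+1, v)), Or.inl rfl, Or.inl (by rw [hxa])⟩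
      by_cases hxa1 : x = a + 1
      · exact ⟨((a, a+1), (a, v), (a+1, v)), Or.inl rfl, Or.inr (by rw [hxa1])⟩
      · obtain ⟨t, ht, h⟩ := (star_edges v r (a+2) (x, v)).2 ⟨x, by omega, by omega, rfl⟩
        exact ⟨t, Or.inr ht, h⟩

lemma star_trip_mem (v : ℕ) : ∀ r a t, t ∈ starTrips v a r →
    ∃ i, i < r ∧ t = ((a+2*i, a+2*i+1), (a+2*i, v), (a+2*i+1, v))
  | 0, a, t => by simp [starTrips]
  | r+1, a, t => by
    simp only [starTrips, List.mem_cons]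
    rintro (rfl | ht)
    · exact ⟨0, by omega, by norm_num⟩
    · obtain ⟨i, hi, rfl⟩ := star_trip_mem v r (a+2) t ht
      exact ⟨i+1, by omega, by ring_nf⟩

lemma goodSeq_star (v : ℕ) : ∀ r a (s : List Edge), 1 ≤ a → a + 2*r ≤ v →
    (∀ i, i < r → (a+2*i, a+2*i+1) ∈ s) →
    (∀ x, a ≤ x → x < a + 2*r → (x, v) ∉ s) →
    GoodSeq (starTrips v a r) s
  | 0, a, s, _, _, _, _ => trivial
  | r+1, a, s, h1, h2, hb, hnew => by
    refine ⟨by simpa using hb 0 (by omega), sw_conj (by omega) (by omega) (by omega),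
      hnew a (le_refl a) (by omega), hnew (a+1) (by omega) (by omega),
      by simp, ?_⟩
    refine goodSeq_star v r (a+2) _ (by omega) (by omega) ?_ ?_
    · intro i hi
      have := hb (i+1) (by omega)
      have harith : a + 2*(i+1) = a+2+2*i := by omega
      rw [harith] at this
      exact List.mem_cons_of_mem _ (List.mem_cons_of_mem _ this)
    · intro x hx1 hx2
      simp only [List.mem_cons]
      rintro (h | h | h)
      · exact absurd (congrArg Prod.fst h) (by simp; omega)
      · exact absurd (congrArg Prod.fst h) (by simp; omega)
      · exact hnew x (by omega) (by omega) h
def stage (v : ℕ) : List Trip :=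
  if v % 4 = 1 then starTrips v 1 ((v-1)/2)
  else if v % 4 = 2 then starTrips v 1 ((v-2)/2)
  else if v % 4 = 3 then starTrips v 2 ((v-3)/2) ++ [((1, v-1), (1, v), (v-1, v))]
  else ((v-2,v-1), (v-2,v), (v-1,v)) :: ((v-2,v), (v-3,v-2), (v-3,v)) :: starTrips v 1 ((v-4)/2)

lemma stage_eq1 {v : ℕ} (h : v % 4 = 1) : stage v = starTrips v 1 ((v-1)/2) := by
  rw [stage, if_pos h]

lemma stage_eq2 {v : ℕ} (h : v % 4 = 2) : stage v = starTrips v 1 ((v-2)/2) := by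
  rw [stage, if_neg (by omega), if_pos h]

lemma stage_eq3 {v : ℕ} (h : v % 4 = 3) :
    stage v = starTrips v 2 ((v-3)/2) ++ [((1, v-1), (1, v), (v-1, v))] := by
  rw [stage, if_neg (by omega), if_neg (by omega), if_pos h]

lemma stage_eq0 {v : ℕ} (h : v % 4 = 0) :
    stage v = ((v-2,v-1), (v-2,v), (v-1,v)) :: ((v-2,v), (v-3,v-2), (v-3,v)) ::
      starTrips v 1 ((v-4)/2) := by
  rw [stage, if_neg (by omega), if_neg (by omega), if_neg (by omega)]

def fl : ℕ → List Edge
  | 0 => B4 | 1 => B4 | 2 => B4 | 3 => B4 | 4 => B4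
  | (v+5) => applyTrips (stage (v+5)) (fl (v+4))

lemma fl_succ (v : ℕ) (h : 4 ≤ v) : fl (v+1) = applyTrips (stage (v+1)) (fl v) := by
  obtain ⟨w, rfl⟩ : ∃ w, v = w + 4 := ⟨v - 4, by omega⟩
  rfl

def ok (v : ℕ) (p : Edge) : Prop := 1 ≤ p.1 ∧ p.1 < p.2 ∧ p.2 ≤ v ∧
  (v % 4 = 2 → ¬(p.1 = v-1 ∧ p.2 = v)) ∧ (v % 4 = 3 → ¬(p.1 = v-2 ∧ p.2 = v-1))

lemma mem_B4 (p : Edge) : p ∈ B4 ↔ ok 4 p := by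
  obtain ⟨a, b⟩ := p
  simp [B4, ok, Prod.ext_iff]
  omega

lemma stage_edges (v : ℕ) (hv : 5 ≤ v) (p : Edge) :
    (∃ t ∈ stage v, p = t.2.1 ∨ p = t.2.2) ↔
    ((∃ x, 1 ≤ x ∧ x < v ∧ (v % 4 = 2 → x ≠ v-1) ∧ p = (x, v)) ∨
      (v % 4 = 0 ∧ p = (v-3, v-2))) := by
  have h4 : v % 4 = 0 ∨ v % 4 = 1 ∨ v % 4 = 2 ∨ v % 4 = 3 := by omega
  rcases h4 with h4 | h4 | h4 | h4
  · have hv8 : 8 ≤ v := by omega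
    rw [stage_eq0 h4]
    simp only [List.mem_cons]
    constructor
    · rintro ⟨t, (rfl | rfl | ht), h⟩
      · rcases h with rfl | rfl
        · exact Or.inl ⟨v-2, by omega, by omega, by omega, rfl⟩
        · exact Or.inl ⟨v-1, by omega, by omega, by omega, rfl⟩
      · rcases h with rfl | rfl
        · exact Or.inr ⟨h4, rfl⟩
        · exact Or.inl ⟨v-3, by omega, by omega, by omega, rfl⟩
      · obtain ⟨x, hx1, hx2, rfl⟩ := (star_edges v _ _ _).1 ⟨t, ht, h⟩
        exact Or.inl ⟨x, by omega, by omega, by omega, rfl⟩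
    · rintro (⟨x, hx1, hx2, -, hp⟩ | ⟨-, hp⟩)
      · by_cases hx : x = v - 2
        · exact ⟨_, Or.inl rfl, Or.inl (by rw [hp, hx])⟩
        by_cases hx' : x = v - 1
        · exact ⟨_, Or.inl rfl, Or.inr (by rw [hp, hx'])⟩
        by_cases hx'' : x = v - 3
        · exact ⟨_, Or.inr (Or.inl rfl), Or.inr (by rw [hp, hx''])⟩
        · obtain ⟨t, ht, h⟩ := (star_edges v ((v-4)/2) 1 (x, v)).2 ⟨x, by omega, by omega, rfl⟩
          exact ⟨t, Or.inr (Or.inr ht), by rw [hp]; exact h⟩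
      · exact ⟨_, Or.inr (Or.inl rfl), Or.inl (by rw [hp])⟩
  · rw [stage_eq1 h4, star_edges]
    have he : 1 + 2*((v-1)/2) = v := by omega
    rw [he]
    constructor
    · rintro ⟨x, hx1, hx2, hp⟩; exact Or.inl ⟨x, hx1, hx2, by omega, hp⟩
    · rintro (⟨x, hx1, hx2, -, hp⟩ | ⟨h0, -⟩)
      · exact ⟨x, hx1, hx2, hp⟩
      · omega
  · rw [stage_eq2 h4, star_edges]
    have he : 1 + 2*((v-2)/2) = v - 1 := by omega
    rw [he]
    constructor
    · rintro ⟨x, hx1, hx2, hp⟩; exact Or.inl ⟨x, by omega, by omega, by omega, hp⟩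
    · rintro (⟨x, hx1, hx2, hx3, hp⟩ | ⟨h0, -⟩)
      · exact ⟨x, by omega, by omega, hp⟩
      · omega
  · have hv7 : 7 ≤ v := by omega
    rw [stage_eq3 h4]
    have he : 2 + 2*((v-3)/2) = v - 1 := by omega
    constructor
    · rintro ⟨t, ht, h⟩
      rw [List.mem_append, List.mem_singleton] at ht
      rcases ht with ht | rfl
      · obtain ⟨x, hx1, hx2, rfl⟩ := (star_edges v _ _ _).1 ⟨t, ht, h⟩
        exact Or.inl ⟨x, by omega, by omega, by omega, rfl⟩
      · rcases h with rfl | rfl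
        · exact Or.inl ⟨1, by omega, by omega, by omega, rfl⟩
        · exact Or.inl ⟨v-1, by omega, by omega, by omega, rfl⟩
    · rintro (⟨x, hx1, hx2, -, hp⟩ | ⟨h0, -⟩)
      · by_cases hx : x = 1
        · refine ⟨((1, v-1), (1, v), (v-1, v)), ?_, Or.inl (by rw [hp, hx])⟩
          simp
        by_cases hx' : x = v - 1
        · refine ⟨((1, v-1), (1, v), (v-1, v)), ?_, Or.inr (by rw [hp, hx'])⟩
          simp
        · obtain ⟨t, ht, h⟩ := (star_edges v ((v-3)/2) 2 (x, v)).2 ⟨x, by omega, by omega, rfl⟩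
          exact ⟨t, by simp [ht], by rw [hp]; exact h⟩
      · omega
lemma mem_fl : ∀ v, 4 ≤ v → ∀ p : Edge, p ∈ fl v ↔ ok v p := by
  intro v hv
  induction v, hv using Nat.le_induction with
  | base => exact mem_B4
  | succ v hv ih =>
    intro p
    rw [fl_succ v hv, mem_applyTrips, stage_edges (v+1) (by omega)]
    obtain ⟨a, b⟩ := p
    rw [ih (a,b)]
    simp only [ok, Prod.mk.injEq]
    constructor
    · rintro (hok | ⟨x, hx1, hx2, hcond, ha, hb⟩ | ⟨h0, ha, hb⟩) <;>
        refine ⟨by omega, by omega, by omega, by omega, by omega⟩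
    · intro hok
      by_cases hb : b = v + 1
      · exact Or.inr (Or.inl ⟨a, by omega, by omega, by omega, rfl, by omega⟩)
      · by_cases hsp : v % 4 = 3 ∧ a = v - 2 ∧ b = v - 1
        · exact Or.inr (Or.inr ⟨by omega, by omega, by omega⟩)
        · exact Or.inl (by omega)
lemma goodSeq_stage (v : ℕ) (hv : 5 ≤ v) : GoodSeq (stage v) (fl (v-1)) := by
  have hmem : ∀ p : Edge, p ∈ fl (v-1) ↔ ok (v-1) p := mem_fl (v-1) (by omega)
  have hnotin : ∀ x : ℕ, (x, v) ∉ fl (v-1) := by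
    intro x hmem'
    rw [hmem] at hmem'
    simp only [ok] at hmem'
    omega
  have h4 : v % 4 = 0 ∨ v % 4 = 1 ∨ v % 4 = 2 ∨ v % 4 = 3 := by omega
  rcases h4 with h4 | h4 | h4 | h4
  · -- v % 4 = 0, v ≥ 8
    have hv8 : 8 ≤ v := by omega
    rw [stage_eq0 h4]
    refine ⟨?_, ?_, hnotin _, hnotin _, by simp; omega, ?_, ?_, ?_, ?_, by simp; omega, ?_⟩
    · rw [hmem]; simp only [ok]; omega
    · exact sw_conj (by omega) (by omega) (by omega)
    · exact List.mem_cons_self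
    · have h := sw_conj (a := v-2) (b := v) (x := v-3) (by omega) (by omega) (by omega)
      simp only [sw] at h ⊢
      rwa [Equiv.swap_comm v (v-3), Equiv.swap_comm (v-2) (v-3)] at h
    · simp only [List.mem_cons]
      rintro (h | h | h)
      · exact absurd (congrArg Prod.snd h) (by simp; omega)
      · exact absurd (congrArg Prod.snd h) (by simp; omega)
      · rw [hmem] at h; simp only [ok] at h; omega
    · simp only [List.mem_cons]
      rintro (h | h | h)
      · exact absurd (congrArg Prod.fst h) (by simp; omega)
      · exact absurd (congrArg Prod.fst h) (by simp; omega)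
      · exact hnotin _ h
    · refine goodSeq_star v ((v-4)/2) 1 _ (by omega) (by omega) ?_ ?_
      · intro i hi
        refine List.mem_cons_of_mem _ (List.mem_cons_of_mem _ (List.mem_cons_of_mem _
          (List.mem_cons_of_mem _ ?_)))
        rw [hmem]; simp only [ok]; omega
      · intro x hx1 hx2
        simp only [List.mem_cons]
        rintro (h | h | h | h | h)
        · exact absurd (congrArg Prod.snd h) (by simp; omega)
        · exact absurd (congrArg Prod.fst h) (by simp; omega)
        · exact absurd (congrArg Prod.fst h) (by simp; omega)
        · exact absurd (congrArg Prod.fst h) (by simp; omega)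
        · exact hnotin _ h
  · -- v % 4 = 1
    rw [stage_eq1 h4]
    refine goodSeq_star v ((v-1)/2) 1 _ (by omega) (by omega) ?_ (fun x _ _ => hnotin x)
    · intro i hi; rw [hmem]; simp only [ok]; omega
  · -- v % 4 = 2
    rw [stage_eq2 h4]
    refine goodSeq_star v ((v-2)/2) 1 _ (by omega) (by omega) ?_ (fun x _ _ => hnotin x)
    · intro i hi; rw [hmem]; simp only [ok]; omega
  · -- v % 4 = 3
    have hv7 : 7 ≤ v := by omega
    rw [stage_eq3 h4]
    refine goodSeq_append _ _ _ ?_ ?_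
    · refine goodSeq_star v ((v-3)/2) 2 _ (by omega) (by omega) ?_ (fun x _ _ => hnotin x)
      · intro i hi; rw [hmem]; simp only [ok]; omega
    · have hs' : ∀ p : Edge, p ∈ applyTrips (starTrips v 2 ((v-3)/2)) (fl (v-1)) ↔
          ok (v-1) p ∨ (∃ x, 2 ≤ x ∧ x < 2+2*((v-3)/2) ∧ p = (x, v)) := by
        intro p
        rw [mem_applyTrips, star_edges, hmem]
      refine ⟨?_, ?_, ?_, ?_, by simp; omega, trivial⟩
      · rw [hs']; exact Or.inl (by simp only [ok]; omega)
      · exact sw_conj (by omega) (by omega) (by omega)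
      · rw [hs']
        rintro (h | ⟨x, hx1, hx2, h⟩)
        · simp only [ok] at h; omega
        · have := congrArg Prod.fst h; simp at this; omega
      · rw [hs']
        rintro (h | ⟨x, hx1, hx2, h⟩)
        · simp only [ok] at h; omega
        · have h1 := congrArg Prod.fst h; simp at h1; omega
lemma doable_fl : ∀ v, 4 ≤ v → Doable (fl v) := by
  intro v hv
  induction v, hv using Nat.le_induction with
  | base => exact ⟨B4, List.Perm.refl _, prod_B4⟩
  | succ v hv ih =>
    rw [fl_succ v hv]
    exact doable_applyTrips _ _ ih (goodSeq_stage (v+1) (by omega))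

lemma nodup_B4 : B4.Nodup := by decide

lemma nodup_fl : ∀ v, 4 ≤ v → (fl v).Nodup := by
  intro v hv
  induction v, hv using Nat.le_induction with
  | base => exact nodup_B4
  | succ v hv ih =>
    rw [fl_succ v hv]
    exact nodup_applyTrips _ _ ih (goodSeq_stage (v+1) (by omega))

lemma tri (v : ℕ) (hv : 1 ≤ v) : (v+1)*v/2 = v*(v-1)/2 + v := by
  obtain ⟨w, rfl⟩ : ∃ w, v = w + 1 := ⟨v - 1, by omega⟩
  have h : (w+1+1)*(w+1) = (w+1)*w + 2*(w+1) := by ring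
  rw [h, Nat.add_mul_div_left _ _ (by norm_num : (0:ℕ) < 2)]
  simp

lemma len_fl : ∀ v, 4 ≤ v →
    (fl v).length + (if v % 4 = 2 ∨ v % 4 = 3 then 1 else 0) = v*(v-1)/2 := by
  intro v hv
  induction v, hv using Nat.le_induction with
  | base => simp [fl, B4]
  | succ v hv ih =>
    rw [fl_succ v hv, length_applyTrips]
    have htri : (v+1)*v/2 = v*(v-1)/2 + v := tri v (by omega)
    have hv1 : (v+1) - 1 = v := by omega
    have h4 : (v+1) % 4 = 0 ∨ (v+1) % 4 = 1 ∨ (v+1) % 4 = 2 ∨ (v+1) % 4 = 3 := by omega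
    rcases h4 with h4 | h4 | h4 | h4
    · rw [stage_eq0 h4]
      simp only [List.length_cons, length_starTrips, hv1]
      rw [htri, if_neg (by omega)]
      rw [if_pos (by omega)] at ih
      omega
    · rw [stage_eq1 h4]
      simp only [length_starTrips, hv1]
      rw [htri, if_neg (by omega)]
      rw [if_neg (by omega)] at ih
      omega
    · rw [stage_eq2 h4]
      simp only [length_starTrips, hv1]
      rw [htri, if_pos (by omega)]
      rw [if_neg (by omega)] at ih
      omega
    · rw [stage_eq3 h4]
      simp only [List.length_append, List.length_cons, List.length_nil, length_starTrips, hv1]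
      rw [htri, if_pos (by omega)]
      rw [if_pos (by omega)] at ih
      omega

lemma len_fl_even : ∀ v, Even ((fl v).length)
  | 0 => by decide
  | 1 => by decide
  | 2 => by decide
  | 3 => by decide
  | 4 => by decide
  | (v+5) => by
    rw [show fl (v+5) = applyTrips (stage (v+5)) (fl (v+4)) from rfl, length_applyTrips]
    obtain ⟨k, hk⟩ := len_fl_even (v+4)
    exact ⟨(stage (v+5)).length + k, by omega⟩

lemma sw_inj {a b c d : ℕ} (hab : a < b) (hcd : c < d) (h : sw (a,b) = sw (c,d)) :
    a = c ∧ b = d := by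
  have h1 : Equiv.swap c d a = b := by
    have := congrArg (fun (e : Equiv.Perm ℕ) => e a) h
    simpa [sw] using this.symm
  rw [Equiv.swap_apply_def] at h1
  split_ifs at h1 <;> omega

lemma package {n m : ℕ} (s : List Edge) (hd : Doable s) (hnd : s.Nodup)
    (hb : ∀ p ∈ s, 1 ≤ p.1 ∧ p.1 < p.2 ∧ p.2 ≤ n) (hl : s.length = m) :
    ∃ L : List (ℕ × ℕ), L.length = m ∧
      (∀ p ∈ L, p.1 ≠ p.2 ∧ p.1 ∈ Finset.Icc 1 n ∧ p.2 ∈ Finset.Icc 1 n) ∧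
      (L.map fun p => Equiv.swap p.1 p.2).Nodup ∧
      (L.map fun p => Equiv.swap p.1 p.2).prod = 1 := by
  obtain ⟨L, hp, h1⟩ := hd
  have hbL : ∀ p ∈ L, 1 ≤ p.1 ∧ p.1 < p.2 ∧ p.2 ≤ n := fun p hpL => hb p (hp.mem_iff.1 hpL)
  refine ⟨L, by rw [hp.length_eq, hl], ?_, ?_, h1⟩
  · intro p hpL
    obtain ⟨h1', h2', h3'⟩ := hbL p hpL
    exact ⟨by omega, Finset.mem_Icc.2 ⟨by omega, by omega⟩, Finset.mem_Icc.2 ⟨by omega, by omega⟩⟩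
  · have hndL : L.Nodup := (hp.nodup_iff).2 hnd
    refine List.Nodup.map_on ?_ hndL
    intro x hx y hy hxy
    obtain ⟨a, b⟩ := x
    obtain ⟨c, d⟩ := y
    have h := sw_inj (hbL _ hx).2.1 (hbL _ hy).2.1 hxy
    exact Prod.ext_iff.2 ⟨h.1, h.2⟩

/-- Theorem 4 (sufficiency): if `m` is even and `6 ≤ m ≤ n(n-1)/2`, then the
identity of `S_n` is a product of `m` pairwise distinct transpositions. -/
theorem stmt15 (n m : ℕ) (hm : Even m) (h6 : 6 ≤ m) (hub : m ≤ n * (n - 1) / 2) :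
    ∃ L : List (ℕ × ℕ),
      L.length = m ∧
      (∀ p ∈ L, p.1 ≠ p.2 ∧ p.1 ∈ Finset.Icc 1 n ∧ p.2 ∈ Finset.Icc 1 n) ∧
      (L.map fun p => Equiv.swap p.1 p.2).Nodup ∧
      (L.map fun p => Equiv.swap p.1 p.2).prod = 1 := by
  have hn4 : 4 ≤ n := by
    by_contra h
    push_neg at h
    interval_cases n <;> simp_all <;> omega
  obtain ⟨q, hq⟩ := hm
  have hm_le : m ≤ (fl n).length := by
    have hlen := len_fl n hn4
    obtain ⟨k, hk⟩ := len_fl_even n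
    by_cases hc : n % 4 = 2 ∨ n % 4 = 3
    · rw [if_pos hc] at hlen; omega
    · rw [if_neg hc] at hlen; omega
  by_cases hm6 : m = 6
  · refine package B4 ⟨B4, List.Perm.refl _, prod_B4⟩ nodup_B4 ?_ (by simp [B4, hm6])
    intro p hp
    have h4n : (4:ℕ) ≤ n := hn4
    fin_cases hp <;> simp <;> omega
  · have hm8 : 8 ≤ m := by omega
    have hex : ∃ v, m ≤ (fl v).length := ⟨n, hm_le⟩
    have hv0P : m ≤ (fl (Nat.find hex)).length := Nat.find_spec hex
    have hv0n : Nat.find hex ≤ n := Nat.find_min' hex hm_le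
    have hsmall : ∀ w, w ≤ 4 → (fl w).length = 6 := by
      intro w hw; interval_cases w <;> rfl
    have hv05 : 5 ≤ Nat.find hex := by
      by_contra h
      push_neg at h
      rw [hsmall _ (by omega)] at hv0P
      omega
    obtain ⟨u, hu⟩ : ∃ u, Nat.find hex = u + 5 := ⟨Nat.find hex - 5, by omega⟩
    have hprev : ¬ m ≤ (fl (u+4)).length := by
      have := Nat.find_min hex (m := u+4) (by omega)
      exact this
    rw [hu] at hv0P hv0n
    rw [show fl (u+5) = applyTrips (stage (u+5)) (fl (u+4)) from rfl,
      length_applyTrips] at hv0P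
    obtain ⟨k4, hk4⟩ := len_fl_even (u+4)
    set j := (m - (fl (u+4)).length) / 2 with hj
    have hjle : j ≤ (stage (u+5)).length := by omega
    have hgs : GoodSeq ((stage (u+5)).take j) (fl (u+4)) :=
      goodSeq_take j _ _ (goodSeq_stage (u+5) (by omega))
    refine package (applyTrips ((stage (u+5)).take j) (fl (u+4)))
      (doable_applyTrips _ _ (doable_fl (u+4) (by omega)) hgs)
      (nodup_applyTrips _ _ (nodup_fl (u+4) (by omega)) hgs) ?_ ?_
    · intro p hp
      rw [mem_applyTrips] at hp
      rcases hp with hp | ⟨t, ht, hpt⟩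
      · rw [mem_fl (u+4) (by omega)] at hp
        obtain ⟨h1, h2, h3, -, -⟩ := hp
        exact ⟨h1, h2, by omega⟩
      · have ht' : t ∈ stage (u+5) := List.take_subset _ _ ht
        have := (stage_edges (u+5) (by omega) p).1 ⟨t, ht', hpt⟩
        rcases this with ⟨x, hx1, hx2, -, rfl⟩ | ⟨-, rfl⟩
        · exact ⟨hx1, hx2, show u+5 ≤ n by omega⟩
        · exact ⟨show (1:ℕ) ≤ u+5-3 by omega, show u+5-3 < u+5-2 by omega,
            show u+5-2 ≤ n by omega⟩
    · rw [length_applyTrips, List.length_take]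
      omega
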